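/- Let 0 < P₁ < 1. The binary Jaccard index Jac(e) = (P₁ − e₁)/(P₁ + e₂), viewed as a function of e = (e₁, e₂) ∈ ℝ², is pseudo-linear on the open convex half-plane {e ∈ ℝ² : P₁ + e₂ > 0}. -/

import Mathlib

open RealInnerProductSpace

/-- A differentiable function `F` is pseudo-convex on `D` if for all `e, e' ∈ D`,
`F e > F e'` implies `⟪∇F e, e' - e⟫ < 0`. -/
def PseudoConvexOn {E : Type*} [NormedAddCommGroup E] [InnerProductSpace ℝ E]
    [CompleteSpace E] (D : Set E) (F : E → ℝ) : Prop :=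
  ∀ e ∈ D, ∀ e' ∈ D, F e > F e' → ⟪gradient F e, e' - e⟫ < 0

/-- `F` is pseudo-linear on `D` if both `F` and `-F` are pseudo-convex on `D`. -/
def PseudoLinearOn {E : Type*} [NormedAddCommGroup E] [InnerProductSpace ℝ E]
    [CompleteSpace E] (D : Set E) (F : E → ℝ) : Prop :=
  PseudoConvexOn D F ∧ PseudoConvexOn D (fun e => -F e)

lemma jac_fderiv (P₁ : ℝ) (e : EuclideanSpace ℝ (Fin 2)) (hb : 0 < P₁ + e 1) :
    HasFDerivAt (fun y : EuclideanSpace ℝ (Fin 2) => (P₁ - y 0) / (P₁ + y 1))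
      ((P₁ - e 0) • ((-((P₁ + e 1) ^ 2)⁻¹) • EuclideanSpace.proj (𝕜 := ℝ) (1 : Fin 2)) +
        (P₁ + e 1)⁻¹ • -(EuclideanSpace.proj (𝕜 := ℝ) (0 : Fin 2))) e := by
  have h1 : HasFDerivAt (fun y : EuclideanSpace ℝ (Fin 2) => P₁ - y 0)
      (-(EuclideanSpace.proj (𝕜 := ℝ) (0 : Fin 2))) e := by
    exact (EuclideanSpace.proj (𝕜 := ℝ) (0 : Fin 2)).hasFDerivAt.const_sub P₁
  have h2 : HasFDerivAt (fun y : EuclideanSpace ℝ (Fin 2) => P₁ + y 1)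
      (EuclideanSpace.proj (𝕜 := ℝ) (1 : Fin 2)) e := by
    exact (EuclideanSpace.proj (𝕜 := ℝ) (1 : Fin 2)).hasFDerivAt.const_add P₁
  have hinv : HasDerivAt Inv.inv (-((P₁ + e 1) ^ 2)⁻¹) (P₁ + e 1) :=
    hasDerivAt_inv hb.ne'
  simpa [div_eq_mul_inv, Function.comp_def, Pi.mul_def] using h1.mul (hinv.comp_hasFDerivAt e h2)

lemma jac_inner (P₁ : ℝ) (e : EuclideanSpace ℝ (Fin 2)) (hb : 0 < P₁ + e 1)
    (v : EuclideanSpace ℝ (Fin 2)) :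
    ⟪gradient (fun e : EuclideanSpace ℝ (Fin 2) => (P₁ - e 0) / (P₁ + e 1)) e, v⟫ =
      (-(v 0) * (P₁ + e 1) - (P₁ - e 0) * v 1) / (P₁ + e 1) ^ 2 := by
  rw [gradient, (jac_fderiv P₁ e hb).fderiv, InnerProductSpace.toDual_symm_apply]
  simp only [ContinuousLinearMap.add_apply, ContinuousLinearMap.smul_apply,
    ContinuousLinearMap.neg_apply, PiLp.proj_apply, smul_eq_mul]
  field_simp
  ring

lemma jac_inner_neg (P₁ : ℝ) (e : EuclideanSpace ℝ (Fin 2)) (hb : 0 < P₁ + e 1)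
    (v : EuclideanSpace ℝ (Fin 2)) :
    ⟪gradient (fun e : EuclideanSpace ℝ (Fin 2) => -((P₁ - e 0) / (P₁ + e 1))) e, v⟫ =
      -((-(v 0) * (P₁ + e 1) - (P₁ - e 0) * v 1) / (P₁ + e 1) ^ 2) := by
  rw [gradient, (HasFDerivAt.fderiv (f := fun e : EuclideanSpace ℝ (Fin 2) => -((P₁ - e 0) / (P₁ + e 1)))
    (jac_fderiv P₁ e hb).neg), InnerProductSpace.toDual_symm_apply]
  simp only [ContinuousLinearMap.neg_apply, ContinuousLinearMap.add_apply,
    ContinuousLinearMap.smul_apply, PiLp.proj_apply, smul_eq_mul]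
  field_simp
  ring

/-- The binary Jaccard index `Jac(e) = (P₁ − e₁)/(P₁ + e₂)` is pseudo-linear on the
open half-plane where its denominator is positive. -/
theorem binary_jaccard_pseudoLinear (P₁ : ℝ) (hP₁ : 0 < P₁) (hP₁' : P₁ < 1) :
    PseudoLinearOn
      {e : EuclideanSpace ℝ (Fin 2) | P₁ + e 1 > 0}
      (fun e => (P₁ - e 0) / (P₁ + e 1)) := by
  constructor
  · intro e he e' he' h
    have hb : 0 < P₁ + e 1 := he
    have hb' : 0 < P₁ + e' 1 := he'
    rw [jac_inner P₁ e hb]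
    have hv0 : (e' - e) 0 = e' 0 - e 0 := rfl
    have hv1 : (e' - e) 1 = e' 1 - e 1 := rfl
    rw [hv0, hv1]
    rw [gt_iff_lt, div_lt_div_iff₀ hb' hb] at h
    apply div_neg_of_neg_of_pos _ (by positivity)
    nlinarith
  · intro e he e' he' h
    have hb : 0 < P₁ + e 1 := he
    have hb' : 0 < P₁ + e' 1 := he'
    rw [jac_inner_neg P₁ e hb]
    have hv0 : (e' - e) 0 = e' 0 - e 0 := rfl
    have hv1 : (e' - e) 1 = e' 1 - e 1 := rfl
    rw [hv0, hv1]
    have h' : (P₁ - e 0) / (P₁ + e 1) < (P₁ - e' 0) / (P₁ + e' 1) := by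
      simpa using h
    rw [div_lt_div_iff₀ hb hb'] at h'
    rw [neg_lt, neg_zero]
    apply div_pos _ (by positivity)
    nlinarith
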